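/- Let D : [0,1] → ℝ be defined by D(x) = Σ_{r≥1} f(ε_r)·(f(m)+1)^{−r} where x = Σ_{r≥1} ε_r (m+1)^{−r} is the base-(m+1) expansion of x (excluding expansions ending in all m's), for strictly increasing f : {0,...,m} → ℕ with f(0)=0 and f(m)>m. Then D is strictly increasing on [0,1]. -/

import Mathlib

/-- The `r`-th digit of the canonical base-`(m+1)` expansion of `x ∈ [0,1)`
(the floor-based expansion, which never ends in an infinite tail of digit `m`). -/
noncomputable def digitD (m : ℕ) (x : ℝ) (r : ℕ) : ℕ :=
  (⌊x * (m + 1) ^ r⌋).toNat % (m + 1)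

/-- `D(x) = Σ_{r ≥ 1} f(ε_r) (f(m)+1)^{-r}` where `x = Σ_{r ≥ 1} ε_r (m+1)^{-r}` is the
canonical expansion; `x = 1` uses the expansion `0.mmm…`, giving `D(1) = 1`. -/
noncomputable def cantorD (m : ℕ) (f : ℕ → ℕ) (x : ℝ) : ℝ :=
  if x = 1 then 1
  else ∑' r : ℕ, (f (digitD m x (r + 1)) : ℝ) / ((f m : ℝ) + 1) ^ (r + 1)

namespace CantorDProof

/-- The integer part of `x (m+1)^r`. -/
noncomputable def A (m : ℕ) (x : ℝ) (r : ℕ) : ℕ := (⌊x * ((m : ℝ) + 1) ^ r⌋).toNat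

lemma digitD_eq (m : ℕ) (x : ℝ) (r : ℕ) : digitD m x r = A m x r % (m + 1) := rfl

variable {m : ℕ} {x y : ℝ}

lemma base_pos : (0 : ℝ) < (m : ℝ) + 1 := by positivity

lemma A_cast (hx : 0 ≤ x) (r : ℕ) : ((A m x r : ℕ) : ℤ) = ⌊x * ((m : ℝ) + 1) ^ r⌋ :=
  Int.toNat_of_nonneg (Int.floor_nonneg.2 (by positivity))

lemma A_le (hx : 0 ≤ x) (r : ℕ) : (A m x r : ℝ) ≤ x * ((m : ℝ) + 1) ^ r := by
  have h := Int.floor_le (x * ((m:ℝ) + 1) ^ r)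
  rw [← A_cast hx r] at h
  exact_mod_cast h

lemma lt_A_add_one (r : ℕ) : x * ((m : ℝ) + 1) ^ r < (A m x r : ℝ) + 1 := by
  have h1 := Int.lt_floor_add_one (x * ((m:ℝ) + 1) ^ r)
  have h2 : ((⌊x * ((m:ℝ) + 1) ^ r⌋ : ℤ) : ℝ) ≤ ((A m x r : ℕ) : ℝ) := by
    have h3 : (⌊x * ((m:ℝ) + 1) ^ r⌋ : ℤ) ≤ ((A m x r : ℕ) : ℤ) := Int.self_le_toNat _
    exact_mod_cast h3
  linarith

lemma A_zero (hx : 0 ≤ x) (hx1 : x < 1) : A m x 0 = 0 := by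
  have h : ⌊x⌋ = 0 := Int.floor_eq_zero_iff.2 ⟨hx, hx1⟩
  simp [A, h]

lemma digitD_lt (r : ℕ) : digitD m x r < m + 1 := Nat.mod_lt _ (by omega)

lemma A_div (hx : 0 ≤ x) (r : ℕ) : A m x (r + 1) / (m + 1) = A m x r := by
  have hb : (0:ℝ) < (m:ℝ) + 1 := base_pos
  have h1 : (m + 1) * A m x r ≤ A m x (r + 1) := by
    have ha : ((m:ℝ) + 1) * (A m x r : ℝ) ≤ x * ((m:ℝ) + 1) ^ (r + 1) := by
      have := A_le hx (m := m) r
      calc ((m:ℝ) + 1) * (A m x r : ℝ) ≤ ((m:ℝ) + 1) * (x * ((m:ℝ)+1)^r) := by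
            exact mul_le_mul_of_nonneg_left this (le_of_lt hb)
        _ = x * ((m:ℝ) + 1) ^ (r + 1) := by ring
    have hb2 : x * ((m:ℝ) + 1) ^ (r + 1) < (A m x (r+1) : ℝ) + 1 := lt_A_add_one _
    have : ((m + 1) * A m x r : ℝ) < (A m x (r+1) : ℝ) + 1 := by push_cast; linarith
    have : (m + 1) * A m x r < A m x (r+1) + 1 := by exact_mod_cast this
    omega
  have h2 : A m x (r + 1) < (A m x r + 1) * (m + 1) := by
    have ha : (A m x (r+1) : ℝ) ≤ x * ((m:ℝ) + 1) ^ (r + 1) := A_le hx _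
    have hb2 : x * ((m:ℝ) + 1) ^ (r + 1) < ((A m x r : ℝ) + 1) * ((m:ℝ) + 1) := by
      have := lt_A_add_one (m := m) (x := x) r
      calc x * ((m:ℝ) + 1) ^ (r + 1) = (x * ((m:ℝ)+1)^r) * ((m:ℝ)+1) := by ring
        _ < ((A m x r : ℝ) + 1) * ((m:ℝ) + 1) := by
            exact mul_lt_mul_of_pos_right this hb
    have : (A m x (r+1) : ℝ) < ((A m x r + 1) * (m + 1) : ℕ) := by push_cast; linarith
    exact_mod_cast this
  exact Nat.div_eq_of_lt_le (by rwa [mul_comm] at h1) h2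

lemma A_succ (hx : 0 ≤ x) (r : ℕ) :
    A m x (r + 1) = (m + 1) * A m x r + digitD m x (r + 1) := by
  conv_lhs => rw [← Nat.div_add_mod (A m x (r + 1)) (m + 1)]
  rw [A_div hx r, digitD_eq]

lemma A_tail (hx : 0 ≤ x) (N : ℕ) (H : ∀ r, N < r → digitD m x r = m) (k : ℕ) :
    A m x (N + k) = (m + 1) ^ k * A m x N + ((m + 1) ^ k - 1) := by
  induction k with
  | zero => simp
  | succ k ih =>
    have hs : A m x (N + k + 1) = (m + 1) * A m x (N + k) + m := by
      rw [A_succ hx, H (N + k + 1) (by omega)]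
    have hp1 : 1 ≤ (m + 1) ^ k := Nat.one_le_pow _ _ (by omega)
    have hp2 : 1 ≤ (m + 1) ^ (k + 1) := Nat.one_le_pow _ _ (by omega)
    have hpow : (m + 1) ^ (k + 1) = (m + 1) ^ k * (m + 1) := pow_succ _ _
    rw [show N + (k + 1) = N + k + 1 from rfl, hs, ih]
    zify [hp1, hp2]
    rw [pow_succ]
    ring

/-- The canonical expansion never ends in an infinite tail of digit `m`. -/
lemma exists_digit_lt (hm : 1 ≤ m) (hx : 0 ≤ x) (hx1 : x < 1) (N : ℕ) :
    ∃ r, N < r ∧ digitD m x r < m := by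
  by_contra h
  push_neg at h
  have H : ∀ r, N < r → digitD m x r = m := fun r hr => by
    have := digitD_lt (m := m) (x := x) (r := r)
    have := h r hr
    omega
  have hb : (0:ℝ) < (m:ℝ) + 1 := base_pos
  have hb1 : (1:ℝ) < (m:ℝ) + 1 := by
    have : (1:ℝ) ≤ (m:ℝ) := by exact_mod_cast hm
    linarith
  set c : ℝ := ((A m x N : ℝ) + 1) / ((m:ℝ) + 1) ^ N - x with hc
  have hcpos : 0 < c := by
    have h1 : x * ((m:ℝ) + 1) ^ N < (A m x N : ℝ) + 1 := lt_A_add_one N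
    have hpow : (0:ℝ) < ((m:ℝ) + 1) ^ N := by positivity
    rw [hc, sub_pos, lt_div_iff₀ hpow]
    linarith [h1]
  have key : ∀ k : ℕ, c ≤ 1 / ((m:ℝ) + 1) ^ (N + k) := by
    intro k
    have hA := A_tail hx N H k
    have hle : ((A m x (N + k) : ℕ) : ℝ) ≤ x * ((m:ℝ) + 1) ^ (N + k) := A_le hx _
    have hp1 : 1 ≤ (m + 1) ^ k := Nat.one_le_pow _ _ (by omega)
    have hcast : ((A m x (N + k) : ℕ) : ℝ)
        = ((m:ℝ) + 1) ^ k * (A m x N : ℝ) + (((m:ℝ) + 1) ^ k - 1) := by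
      rw [hA]
      push_cast [hp1]
      ring
    have hpowNk : (0:ℝ) < ((m:ℝ) + 1) ^ (N + k) := by positivity
    have hpowN : (0:ℝ) < ((m:ℝ) + 1) ^ N := by positivity
    rw [le_div_iff₀ hpowNk]
    have hexp : c * ((m:ℝ) + 1) ^ (N + k)
        = ((A m x N : ℝ) + 1) * ((m:ℝ) + 1) ^ k - x * ((m:ℝ) + 1) ^ (N + k) := by
      rw [hc]
      rw [pow_add]
      field_simp
    rw [hexp]
    rw [hcast] at hle
    have : (((m:ℝ)+1)^k * (A m x N : ℝ) + (((m:ℝ)+1)^k - 1)) ≤ x * ((m:ℝ)+1)^(N+k) := hle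
    nlinarith [this]
  obtain ⟨k, hk⟩ := exists_pow_lt_of_lt_one hcpos (show 1 / ((m:ℝ) + 1) < 1 by
    rw [div_lt_one hb]; linarith)
  have h1 : (1 / ((m:ℝ) + 1)) ^ (N + k) ≤ (1 / ((m:ℝ) + 1)) ^ k := by
    apply pow_le_pow_of_le_one (by positivity) (by rw [div_le_one hb]; linarith) (by omega)
  have h2 : (1:ℝ) / ((m:ℝ) + 1) ^ (N + k) = (1 / ((m:ℝ) + 1)) ^ (N + k) := by
    rw [div_pow, one_pow]
  have := key k
  rw [h2] at this
  linarith

/-- If `x < y` in `[0,1)` then there is a first position where the digits differ,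
and there the digit of `x` is smaller. -/
lemma exists_diff (hm : 1 ≤ m) (hx0 : 0 ≤ x) (hx1 : x < 1) (hy0 : 0 ≤ y) (hy1 : y < 1)
    (hxy : x < y) :
    ∃ s : ℕ, (∀ r ≤ s, A m x r = A m y r) ∧ digitD m x (s + 1) < digitD m y (s + 1) := by
  have hb : (0:ℝ) < (m:ℝ) + 1 := base_pos
  have hb1 : (1:ℝ) < (m:ℝ) + 1 := by
    have : (1:ℝ) ≤ (m:ℝ) := by exact_mod_cast hm
    linarith
  have hP : ∃ N, A m x N ≠ A m y N := by
    obtain ⟨n, hn⟩ := exists_pow_lt_of_lt_one (show (0:ℝ) < y - x by linarith)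
      (show 1 / ((m:ℝ) + 1) < 1 by rw [div_lt_one hb]; linarith)
    refine ⟨n, fun hEq => ?_⟩
    have hpow : (0:ℝ) < ((m:ℝ) + 1) ^ n := by positivity
    have h1 : (A m x n : ℝ) ≤ x * ((m:ℝ) + 1) ^ n := A_le hx0 n
    have h2 : y * ((m:ℝ) + 1) ^ n < (A m y n : ℝ) + 1 := lt_A_add_one n
    have h3 : (A m x n : ℝ) = (A m y n : ℝ) := by exact_mod_cast hEq
    have h4 : (y - x) * ((m:ℝ) + 1) ^ n < 1 := by nlinarith
    have h5 : (1 / ((m:ℝ) + 1)) ^ n * ((m:ℝ) + 1) ^ n = 1 := by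
      rw [div_pow, one_pow, div_mul_cancel₀]
      positivity
    nlinarith [hn]
  classical
  let n := Nat.find hP
  have hnP : A m x n ≠ A m y n := Nat.find_spec hP
  have hn0 : n ≠ 0 := by
    intro h
    apply hnP
    rw [h, A_zero hx0 hx1, A_zero hy0 hy1]
  obtain ⟨s, hs⟩ : ∃ s, n = s + 1 := ⟨n - 1, by omega⟩
  refine ⟨s, ?_, ?_⟩
  · intro r hr
    by_contra hne
    exact absurd (Nat.find_min hP (show r < n by omega)) (by simpa using hne)
  · have hAs : A m x s = A m y s := by
      by_contra hne
      exact absurd (Nat.find_min hP (show s < n by omega)) (by simpa using hne)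
    have hx' := A_succ hx0 (m := m) s
    have hy' := A_succ hy0 (m := m) (x := y) s
    rw [hAs] at hx' 
    have hneq : A m x (s + 1) ≠ A m y (s + 1) := hs ▸ hnP
    have hdx := digitD_lt (m := m) (x := x) (r := s + 1)
    have hdy := digitD_lt (m := m) (x := y) (r := s + 1)
    rcases lt_trichotomy (digitD m x (s + 1)) (digitD m y (s + 1)) with h | h | h
    · exact h
    · exfalso; apply hneq; rw [hx', hy', h]
    · exfalso
      have hlt : A m y (s + 1) < A m x (s + 1) := by omega
      have h1 : y * ((m:ℝ) + 1) ^ (s + 1) < (A m y (s + 1) : ℝ) + 1 := lt_A_add_one _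
      have h2 : (A m x (s + 1) : ℝ) ≤ x * ((m:ℝ) + 1) ^ (s + 1) := A_le hx0 _
      have h3 : (A m y (s + 1) : ℝ) + 1 ≤ (A m x (s + 1) : ℝ) := by exact_mod_cast hlt
      have hpow : (0:ℝ) < ((m:ℝ) + 1) ^ (s + 1) := by positivity
      nlinarith

section D

variable (f : ℕ → ℕ)

/-- The `r`-th term of the series defining `cantorD`. -/
noncomputable def term (m : ℕ) (f : ℕ → ℕ) (x : ℝ) (r : ℕ) : ℝ :=
  (f (digitD m x (r + 1)) : ℝ) / ((f m : ℝ) + 1) ^ (r + 1)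

variable (hf : ∀ i j, i < j → j ≤ m → f i < f j) (hfm : m < f m) (hm : 1 ≤ m)

lemma fB_pos (hfm : m < f m) : (0:ℝ) < (f m : ℝ) + 1 := by positivity

lemma fB_one_lt (hfm : m < f m) (hm : 1 ≤ m) : (1:ℝ) < (f m : ℝ) + 1 := by
  have : 1 ≤ f m := by omega
  have : (1:ℝ) ≤ (f m : ℝ) := by exact_mod_cast this
  linarith

lemma f_le (hf : ∀ i j, i < j → j ≤ m → f i < f j) {d : ℕ} (hd : d ≤ m) : f d ≤ f m := by
  rcases eq_or_lt_of_le hd with h | h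
  · rw [h]
  · exact le_of_lt (hf d m h le_rfl)

lemma geom_summable (hfm : m < f m) (hm : 1 ≤ m) (N : ℕ) :
    Summable (fun r : ℕ => (f m : ℝ) / ((f m : ℝ) + 1) ^ (N + r + 1)) := by
  have hB := fB_one_lt f hfm hm
  have heq : (fun r : ℕ => (f m : ℝ) / ((f m : ℝ) + 1) ^ (N + r + 1))
      = fun r : ℕ => ((f m : ℝ) / ((f m : ℝ) + 1) ^ (N + 1)) * (1 / ((f m : ℝ) + 1)) ^ r := by
    funext r
    rw [div_pow, one_pow, show N + r + 1 = (N + 1) + r by omega, pow_add]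
    field_simp
  rw [heq]
  exact (summable_geometric_of_lt_one (by positivity) (by rw [div_lt_one (by linarith)]; linarith)).mul_left _

lemma geom_tsum (hfm : m < f m) (hm : 1 ≤ m) (N : ℕ) :
    ∑' r : ℕ, (f m : ℝ) / ((f m : ℝ) + 1) ^ (N + r + 1) = 1 / ((f m : ℝ) + 1) ^ N := by
  have hB := fB_one_lt f hfm hm
  have hM : (0:ℝ) < (f m : ℝ) := by
    have : 1 ≤ f m := by omega
    exact_mod_cast Nat.lt_of_lt_of_le Nat.zero_lt_one this
  have heq : (fun r : ℕ => (f m : ℝ) / ((f m : ℝ) + 1) ^ (N + r + 1))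
      = fun r : ℕ => ((f m : ℝ) / ((f m : ℝ) + 1) ^ (N + 1)) * (1 / ((f m : ℝ) + 1)) ^ r := by
    funext r
    rw [div_pow, one_pow, show N + r + 1 = (N + 1) + r by omega, pow_add]
    field_simp
  rw [heq, tsum_mul_left,
    tsum_geometric_of_lt_one (by positivity) (by rw [div_lt_one (by linarith)]; linarith)]
  have h1 : (1:ℝ) - 1 / ((f m : ℝ) + 1) = (f m : ℝ) / ((f m : ℝ) + 1) := by
    field_simp
    ring
  rw [h1, pow_succ]
  rw [inv_div]
  field_simp

lemma term_nonneg (x : ℝ) (r : ℕ) : 0 ≤ term m f x r := by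
  unfold term; positivity

lemma term_le (hf : ∀ i j, i < j → j ≤ m → f i < f j) (hfm : m < f m) (hm : 1 ≤ m)
    (x : ℝ) (N r : ℕ) :
    term m f x (N + r) ≤ (f m : ℝ) / ((f m : ℝ) + 1) ^ (N + r + 1) := by
  unfold term
  have hd : digitD m x (N + r + 1) ≤ m := by
    have := digitD_lt (m := m) (x := x) (r := N + r + 1); omega
  have h1 : (f (digitD m x (N + r + 1)) : ℝ) ≤ (f m : ℝ) := by
    exact_mod_cast f_le f hf hd
  gcongr

lemma summable_term (hf : ∀ i j, i < j → j ≤ m → f i < f j) (hfm : m < f m) (hm : 1 ≤ m)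
    (x : ℝ) : Summable (term m f x) := by
  apply Summable.of_nonneg_of_le (fun r => term_nonneg f x r) (fun r => ?_)
    (geom_summable f hfm hm 0)
  have := term_le f hf hfm hm x 0 r
  simpa using this

/-- Strict bound on the tail of the series. -/
lemma tail_lt (hf : ∀ i j, i < j → j ≤ m → f i < f j) (hfm : m < f m) (hm : 1 ≤ m)
    (hx0 : 0 ≤ x) (hx1 : x < 1) (N : ℕ) :
    ∑' r : ℕ, term m f x (N + r) < 1 / ((f m : ℝ) + 1) ^ N := by
  obtain ⟨r0, hr0N, hr0⟩ := exists_digit_lt hm hx0 hx1 N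
  set i := r0 - N - 1 with hi
  have hNi : N + i + 1 = r0 := by omega
  have hstrict : term m f x (N + i) < (f m : ℝ) / ((f m : ℝ) + 1) ^ (N + i + 1) := by
    unfold term
    have h1 : f (digitD m x (N + i + 1)) < f m := by
      rw [hNi]; exact hf _ m hr0 le_rfl
    have h1' : (f (digitD m x (N + i + 1)) : ℝ) < (f m : ℝ) := by exact_mod_cast h1
    gcongr
  calc ∑' r : ℕ, term m f x (N + r)
      < ∑' r : ℕ, (f m : ℝ) / ((f m : ℝ) + 1) ^ (N + r + 1) := by
        apply Summable.tsum_lt_tsum_of_nonneg (fun r => term_nonneg f x _)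
          (fun r => term_le f hf hfm hm x N r) hstrict (geom_summable f hfm hm N)
    _ = 1 / ((f m : ℝ) + 1) ^ N := geom_tsum f hfm hm N

end D

end CantorDProof

open CantorDProof in
theorem cantorD_strictMonoOn (m : ℕ) (hm : 1 ≤ m) (f : ℕ → ℕ)
    (hf : ∀ i j, i < j → j ≤ m → f i < f j) (hf0 : f 0 = 0) (hfm : m < f m) :
    StrictMonoOn (cantorD m f) (Set.Icc 0 1) := by
  have hterm : ∀ x : ℝ, (fun r : ℕ => (f (digitD m x (r + 1)) : ℝ) / ((f m : ℝ) + 1) ^ (r + 1))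
      = term m f x := fun x => rfl
  intro x hx y hy hxy
  obtain ⟨hx0, hx1⟩ := hx
  obtain ⟨hy0, hy1⟩ := hy
  have hx1' : x < 1 := lt_of_lt_of_le hxy hy1
  have hBpos : (0:ℝ) < (f m : ℝ) + 1 := by positivity
  by_cases hy1'' : y = 1
  · -- case y = 1 : show cantorD x < 1
    rw [cantorD, if_neg (ne_of_lt hx1'), hy1'', cantorD, if_pos rfl, hterm]
    have h0 : (∑' r : ℕ, term m f x r) = ∑' r : ℕ, term m f x (0 + r) :=
      tsum_congr fun r => by rw [zero_add]
    rw [h0]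
    have := tail_lt f hf hfm hm hx0 hx1' 0
    simpa using this
  · have hylt : y < 1 := lt_of_le_of_ne hy1 hy1''
    rw [cantorD, if_neg (ne_of_lt hx1'), cantorD, if_neg hy1'', hterm, hterm]
    obtain ⟨s, hAeq, hdlt⟩ := exists_diff hm hx0 hx1' hy0 hylt hxy
    have hsx := summable_term f hf hfm hm x
    have hsy := summable_term f hf hfm hm y
    rw [← Summable.sum_add_tsum_nat_add (s + 1) hsx, ← Summable.sum_add_tsum_nat_add (s + 1) hsy]
    -- partial sums up to s agree
    have hdig_eq : ∀ r < s, digitD m x (r + 1) = digitD m y (r + 1) := by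
      intro r hr
      rw [digitD_eq, digitD_eq, hAeq (r + 1) (by omega)]
    have hpsum : ∑ r ∈ Finset.range s, term m f x r = ∑ r ∈ Finset.range s, term m f y r := by
      apply Finset.sum_congr rfl
      intro r hr
      unfold term
      rw [hdig_eq r (Finset.mem_range.mp hr)]
    rw [Finset.sum_range_succ, Finset.sum_range_succ, hpsum]
    have htailx : (∑' r : ℕ, term m f x (r + (s + 1))) < 1 / ((f m : ℝ) + 1) ^ (s + 1) := by
      have h0 : (∑' r : ℕ, term m f x (r + (s + 1))) = ∑' r : ℕ, term m f x ((s + 1) + r) :=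
        tsum_congr fun r => by rw [add_comm]
      rw [h0]
      exact tail_lt f hf hfm hm hx0 hx1' (s + 1)
    have htaily : 0 ≤ ∑' r : ℕ, term m f y (r + (s + 1)) :=
      tsum_nonneg fun r => term_nonneg f y _
    have hstep : term m f x s + 1 / ((f m : ℝ) + 1) ^ (s + 1) ≤ term m f y s := by
      unfold term
      have h1 : f (digitD m x (s + 1)) + 1 ≤ f (digitD m y (s + 1)) := by
        have hdy : digitD m y (s + 1) ≤ m := by
          have := digitD_lt (m := m) (x := y) (r := s + 1); omega
        exact hf _ _ hdlt hdy
      have h1' : (f (digitD m x (s + 1)) : ℝ) + 1 ≤ (f (digitD m y (s + 1)) : ℝ) := by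
        exact_mod_cast h1
      have hpow : (0:ℝ) < ((f m : ℝ) + 1) ^ (s + 1) := by positivity
      rw [← add_div]
      gcongr
    linarith
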